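/- Let s be a normalized complete Pick kernel on a set X realized by an RKHS (H, s), and let (z_n) be a sequence in X with ‖s_{z_n}‖ → ∞. Then for every z ∈ X, lim_{n→∞} d_H(z_n, z) = 1, where d_H is the kernel pseudometric. -/

import Mathlib

noncomputable section

open scoped InnerProductSpace ComplexOrder

/-- `φ : X → ℂ` is a multiplier from the RKHS on `X` with kernel map `k` to the RKHS with
kernel map `l`, implemented by the bounded operator `T`, i.e. `T* l_x = conj (φ x) • k_x`. -/
def IsMultiplier {X Hk Hl : Type*}
    [NormedAddCommGroup Hk] [InnerProductSpace ℂ Hk] [CompleteSpace Hk]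
    [NormedAddCommGroup Hl] [InnerProductSpace ℂ Hl] [CompleteSpace Hl]
    (k : X → Hk) (l : X → Hl) (φ : X → ℂ) (T : Hk →L[ℂ] Hl) : Prop :=
  ∀ x, ContinuousLinearMap.adjoint T (l x) = (starRingEnd ℂ) (φ x) • k x

/-- The pseudometric induced by the kernel map `k`. -/
def kernelDist {X H : Type*} [NormedAddCommGroup H] [InnerProductSpace ℂ H]
    (k : X → H) (z w : X) : ℝ :=
  Real.sqrt (1 - ‖⟪k z, k w⟫_ℂ‖ ^ 2 / (‖k z‖ ^ 2 * ‖k w‖ ^ 2))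

/-- **Lemma 5.2 (a)**: in a normalized complete Pick space, if `‖s_{z_n}‖ → ∞` then
`d_H(z_n, z) → 1` for every `z ∈ X`. -/
theorem statement13 {X H : Type*}
    [NormedAddCommGroup H] [InnerProductSpace ℂ H] [CompleteSpace H]
    (s : X → H) (hs : ∀ x, s x ≠ 0)
    (hdense : Dense ((Submodule.span ℂ (Set.range s) : Submodule ℂ H) : Set H))
    {K : Type*} [NormedAddCommGroup K] [InnerProductSpace ℂ K] [CompleteSpace K]
    (b : X → K) (z₀ : X) (hb₀ : b z₀ = 0) (hb : ∀ z, ‖b z‖ < 1)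
    (hker : ∀ z w : X, ⟪s w, s z⟫_ℂ = (1 - ⟪b w, b z⟫_ℂ)⁻¹)
    (zseq : ℕ → X)
    (htend : Filter.Tendsto (fun n => ‖s (zseq n)‖) Filter.atTop Filter.atTop) :
    ∀ z : X, Filter.Tendsto (fun n => kernelDist s (zseq n) z) Filter.atTop (nhds 1) := by
  intro z
  have hszpos : 0 < ‖s z‖ := norm_pos_iff.mpr (hs z)
  have hbz : 0 < 1 - ‖b z‖ := by linarith [hb z]
  set c : ℝ := (1 - ‖b z‖)⁻¹ with hc
  have hcpos : 0 < c := inv_pos.mpr hbz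
  have hbound : ∀ w, ‖⟪s w, s z⟫_ℂ‖ ≤ c := by
    intro w
    rw [hker z w, norm_inv]
    apply inv_anti₀ hbz
    have h1 : ‖⟪b w, b z⟫_ℂ‖ ≤ ‖b z‖ := by
      calc ‖⟪b w, b z⟫_ℂ‖ ≤ ‖b w‖ * ‖b z‖ := norm_inner_le_norm _ _
        _ ≤ 1 * ‖b z‖ := by
            apply mul_le_mul_of_nonneg_right (le_of_lt (hb w)) (norm_nonneg _)
        _ = ‖b z‖ := one_mul _
    calc 1 - ‖b z‖ ≤ ‖(1:ℂ)‖ - ‖⟪b w, b z⟫_ℂ‖ := by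
          simp only [norm_one]; linarith
      _ ≤ ‖1 - ⟪b w, b z⟫_ℂ‖ := norm_sub_norm_le _ _
  have hratio : Filter.Tendsto
      (fun n => ‖⟪s (zseq n), s z⟫_ℂ‖ ^ 2 / (‖s (zseq n)‖ ^ 2 * ‖s z‖ ^ 2))
      Filter.atTop (nhds 0) := by
    have hden : Filter.Tendsto (fun n => ‖s (zseq n)‖ ^ 2 * ‖s z‖ ^ 2)
        Filter.atTop Filter.atTop := by
      apply Filter.Tendsto.atTop_mul_const (by positivity)
      exact (Filter.tendsto_pow_atTop (two_ne_zero)).comp htend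
    have hg : Filter.Tendsto (fun n => c ^ 2 / (‖s (zseq n)‖ ^ 2 * ‖s z‖ ^ 2))
        Filter.atTop (nhds 0) := Filter.Tendsto.div_atTop tendsto_const_nhds hden
    apply squeeze_zero (fun n => by positivity) _ hg
    intro n
    have hden' : 0 < ‖s (zseq n)‖ ^ 2 * ‖s z‖ ^ 2 := by
      have := norm_pos_iff.mpr (hs (zseq n)); positivity
    gcongr
    exact hbound (zseq n)
  have hfin : Filter.Tendsto (fun n => Real.sqrt
      (1 - ‖⟪s (zseq n), s z⟫_ℂ‖ ^ 2 / (‖s (zseq n)‖ ^ 2 * ‖s z‖ ^ 2)))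
      Filter.atTop (nhds 1) := by
    have h0 := (tendsto_const_nhds (α := ℕ) (x := (1:ℝ))).sub hratio
    rw [sub_zero] at h0
    have := (Real.continuous_sqrt.tendsto 1).comp h0
    simpa [Function.comp_def] using this
  exact hfin
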